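/- arXiv:0803.4386 — 2 statements merged into one kernel-verified Lean document; each statement's English description precedes it below -/
import Mathlib

section
/- With the lexicographic edge order on K_n and the notion of G-active edges as above, an edge e of K_n is G-active if and only if e is Ψ(G)-active, for every connected graph G on [n]. -/
open scoped Classical

noncomputable section

/-- The lexicographic key of the edge `{a, b}` of the complete graph on `Fin n`:
the pair `(min a b, max a b)` with the lexicographic order. -/
def edgeKey {n : ℕ} (a b : Fin n) : Fin n ×ₗ Fin n := toLex (min a b, max a b)

/-- The spanning subgraph `G^{>e}` of `G` consisting of the edges strictly greater
than `e` in the lexicographic order. -/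
def aboveEdge {n : ℕ} (G : SimpleGraph (Fin n)) (e : Fin n ×ₗ Fin n) :
    SimpleGraph (Fin n) where
  Adj a b := G.Adj a b ∧ e < edgeKey a b
  symm := by
    refine ⟨?_⟩
    intro a b hab
    refine ⟨hab.1.symm, ?_⟩
    have : edgeKey a b = edgeKey b a := by
      unfold edgeKey; rw [min_comm a b, max_comm a b]
    rw [← this]; exact hab.2
  loopless := ⟨fun a ha => G.loopless.irrefl a ha.1⟩

/-- An edge `e = (i, j)` of `K_n` (with `i < j`) is `G`-active if `i` and `j` are joined
by a path in `G^{>e}`. -/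
def IsActive {n : ℕ} (G : SimpleGraph (Fin n)) (e : Fin n ×ₗ Fin n) : Prop :=
  (ofLex e).1 < (ofLex e).2 ∧ (aboveEdge G e).Reachable (ofLex e).1 (ofLex e).2

instance {n : ℕ} : Fintype (Fin n ×ₗ Fin n) := Fintype.ofEquiv (Fin n × Fin n) toLex

/-- The finset of `G`-active edges. -/
def activeEdges {n : ℕ} (G : SimpleGraph (Fin n)) : Finset (Fin n ×ₗ Fin n) :=
  Finset.univ.filter (IsActive G)

/-- `G ⊕ e`: toggle the edge `e` (delete it if present, add it otherwise). -/
def toggleEdge {n : ℕ} (G : SimpleGraph (Fin n)) (e : Fin n ×ₗ Fin n) :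
    SimpleGraph (Fin n) :=
  if G.Adj (ofLex e).1 (ofLex e).2 then G.deleteEdges {s((ofLex e).1, (ofLex e).2)}
  else G ⊔ SimpleGraph.fromEdgeSet {s((ofLex e).1, (ofLex e).2)}

/-- The map `Ψ`: toggle the least `G`-active edge, if any. -/
def Psi {n : ℕ} (G : SimpleGraph (Fin n)) : SimpleGraph (Fin n) :=
  if h : (activeEdges G).Nonempty then toggleEdge G ((activeEdges G).min' h) else G

end

lemma sym2_min_max {n : ℕ} (a b : Fin n) : s(a, b) = s(min a b, max a b) := by
  rcases le_total a b with h | h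
  · rw [min_eq_left h, max_eq_right h]
  · rw [min_eq_right h, max_eq_left h, Sym2.eq_swap]

lemma edgeKey_eq_iff {n : ℕ} {a b c d : Fin n} :
    edgeKey a b = edgeKey c d ↔ s(a, b) = s(c, d) := by
  constructor
  · intro h
    unfold edgeKey at h
    have h' := toLex.injective h
    have h1 : min a b = min c d := congrArg Prod.fst h'
    have h2 : max a b = max c d := congrArg Prod.snd h'
    rw [sym2_min_max a b, sym2_min_max c d, h1, h2]
  · intro h
    rcases Sym2.eq_iff.mp h with ⟨rfl, rfl⟩ | ⟨rfl, rfl⟩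
    · rfl
    · unfold edgeKey; rw [min_comm, max_comm]

lemma reachable_of_adj_imp {V : Type*} {A B : SimpleGraph V}
    (h : ∀ x y, A.Adj x y → B.Reachable x y) {u v : V}
    (huv : A.Reachable u v) : B.Reachable u v := by
  rw [SimpleGraph.reachable_iff_reflTransGen] at huv
  induction huv with
  | refl => exact SimpleGraph.Reachable.refl _
  | tail _ hadj ih => exact ih.trans (h _ _ hadj)

lemma toggle_adj_of_ne {n : ℕ} (G : SimpleGraph (Fin n)) (f : Fin n ×ₗ Fin n)
    {a b : Fin n} (h : s(a, b) ≠ s((ofLex f).1, (ofLex f).2)) :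
    (toggleEdge G f).Adj a b ↔ G.Adj a b := by
  unfold toggleEdge
  split
  · simp [SimpleGraph.deleteEdges_adj, h]
  · simp only [SimpleGraph.sup_adj, SimpleGraph.fromEdgeSet_adj, Set.mem_singleton_iff]
    constructor
    · rintro (hg | ⟨he, _⟩)
      · exact hg
      · exact absurd he h
    · exact Or.inl

/-- For every connected graph `G` on `[n]`, an edge of `K_n` is `G`-active if and only if
it is `Ψ(G)`-active. -/
theorem active_iff_active_psi {n : ℕ} (G : SimpleGraph (Fin n)) (hG : G.Connected)
    (e : Fin n ×ₗ Fin n) : IsActive G e ↔ IsActive (Psi G) e := by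
  unfold Psi
  split
  case isFalse => rfl
  case isTrue hne =>
  set f := (activeEdges G).min' hne with hf
  have hfact : IsActive G f := by
    have := (activeEdges G).min'_mem hne
    exact (Finset.mem_filter.mp this).2
  obtain ⟨hij, hreach⟩ := hfact
  set i := (ofLex f).1
  set j := (ofLex f).2
  have hkey : edgeKey i j = f := by
    unfold edgeKey
    rw [min_eq_left hij.le, max_eq_right hij.le]
    exact toLex_ofLex f
  by_cases hef : e < f
  · -- toggled edge is above threshold e; but its endpoints are reachable without it
    have hH_le : ∀ x y, (aboveEdge G f).Adj x y →
        (aboveEdge G e).Adj x y ∧ (aboveEdge (toggleEdge G f) e).Adj x y := by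
      intro x y ⟨hxy, hk⟩
      have hne' : s(x, y) ≠ s(i, j) := by
        intro hs
        have := edgeKey_eq_iff.mpr hs
        rw [hkey] at this
        exact absurd this (ne_of_gt hk)
      exact ⟨⟨hxy, hef.trans hk⟩, ⟨(toggle_adj_of_ne G f hne').mpr hxy, hef.trans hk⟩⟩
    have hreachA : (aboveEdge G e).Reachable i j :=
      reachable_of_adj_imp (fun x y h => ((hH_le x y h).1).reachable) hreach
    have hreachB : (aboveEdge (toggleEdge G f) e).Reachable i j :=
      reachable_of_adj_imp (fun x y h => ((hH_le x y h).2).reachable) hreach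
    have hAB : ∀ u v, (aboveEdge G e).Reachable u v ↔
        (aboveEdge (toggleEdge G f) e).Reachable u v := by
      intro u v
      constructor
      · refine reachable_of_adj_imp (fun x y h => ?_)
        obtain ⟨hxy, hk⟩ := h
        by_cases hs : s(x, y) = s(i, j)
        · rcases Sym2.eq_iff.mp hs with ⟨rfl, rfl⟩ | ⟨rfl, rfl⟩
          · exact hreachB
          · exact hreachB.symm
        · exact SimpleGraph.Adj.reachable ⟨(toggle_adj_of_ne G f hs).mpr hxy, hk⟩
      · refine reachable_of_adj_imp (fun x y h => ?_)
        obtain ⟨hxy, hk⟩ := h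
        by_cases hs : s(x, y) = s(i, j)
        · rcases Sym2.eq_iff.mp hs with ⟨rfl, rfl⟩ | ⟨rfl, rfl⟩
          · exact hreachA
          · exact hreachA.symm
        · exact SimpleGraph.Adj.reachable ⟨(toggle_adj_of_ne G f hs).mp hxy, hk⟩
    unfold IsActive
    rw [hAB]
  · -- toggled edge is at or below threshold e: the truncations coincide
    have hadj_eq : aboveEdge (toggleEdge G f) e = aboveEdge G e := by
      ext x y
      constructor
      · rintro ⟨hxy, hk⟩
        refine ⟨?_, hk⟩
        by_cases hs : s(x, y) = s(i, j)
        · exfalso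
          have := edgeKey_eq_iff.mpr hs
          rw [hkey] at this
          rw [this] at hk
          exact hef hk
        · exact (toggle_adj_of_ne G f hs).mp hxy
      · rintro ⟨hxy, hk⟩
        refine ⟨?_, hk⟩
        by_cases hs : s(x, y) = s(i, j)
        · exfalso
          have := edgeKey_eq_iff.mpr hs
          rw [hkey] at this
          rw [this] at hk
          exact hef hk
        · exact (toggle_adj_of_ne G f hs).mpr hxy
    unfold IsActive
    rw [hadj_eq]
end

section
/- Every rooted Cayley tree T on vertex set {0,...,n} with root i_0 is h-increasing for exactly one vector h ∈ Z^n satisfying h̄_{i_0} = min_{0 ≤ i ≤ n} h̄_i, where h̄_i = h_i + i/(n+1) and h_0 = 0. Explicitly, this h is given by: h_i - h_{i_0} equals the number of descents along the path in T from i_0 to i (a descent in the label sequence i_0, i_1, ..., i_s is an index r < s with i_{r+1} < i_r), together with h_0 = 0. -/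
open scoped Classical
open MeasureTheory

noncomputable section

def extv {α : Type*} [Zero α] {n : ℕ} (x : Fin n → α) : Fin (n + 1) → α :=
  Fin.cases 0 x

/-- The centroid `h̄` of `h ∈ ℤ^n`: `h̄_i = h_i + i/(n+1)`, with the convention `h_0 = 0`. -/
def cent (n : ℕ) (h : Fin n → ℤ) : Fin (n + 1) → ℝ :=
  fun i => (extv h i : ℤ) + (i : ℝ) / (n + 1)

/-- The graph `G_h` on `{0, …, n}` whose edges are the pairs `(i,j)` with `|h̄_i - h̄_j| < 1`. -/
def Gh (n : ℕ) (h : Fin n → ℤ) : SimpleGraph (Fin (n + 1)) where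
  Adj i j := i ≠ j ∧ |cent n h i - cent n h j| < 1
  symm := ⟨fun i j hij => ⟨hij.1.symm, by rw [abs_sub_comm]; exact hij.2⟩⟩
  loopless := ⟨fun i hi => hi.1 rfl⟩

/-- The key of the pair `(i, j)`: the pair `(min(h̄_i, h̄_j), max(h̄_i, h̄_j))` with the
lexicographic order, along which edges of `G_h` are ordered. -/
def keyC (n : ℕ) (h : Fin n → ℤ) (p : Fin (n + 1) × Fin (n + 1)) : ℝ ×ₗ ℝ :=
  toLex (min (cent n h p.1) (cent n h p.2), max (cent n h p.1) (cent n h p.2))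

/-- The subgraph of `G` consisting of the edges strictly greater than `e`. -/
def aboveC (n : ℕ) (h : Fin n → ℤ) (G : SimpleGraph (Fin (n + 1)))
    (e : Fin (n + 1) × Fin (n + 1)) : SimpleGraph (Fin (n + 1)) where
  Adj a b := G.Adj a b ∧ keyC n h e < keyC n h (a, b)
  symm := ⟨by
    intro a b hab
    refine ⟨hab.1.symm, ?_⟩
    have hk : keyC n h (a, b) = keyC n h (b, a) := by
      simp only [keyC]; rw [min_comm (cent n h a), max_comm (cent n h a)]
    rw [← hk]; exact hab.2⟩
  loopless := ⟨fun a ha => G.loopless.irrefl a ha.1⟩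

/-- An edge `e = (i, j)` of `G_h` (normalized so that `h̄_i < h̄_j`) is `(G, h)`-active if
`i` and `j` are joined by a path among the edges of `G` strictly greater than `e`. -/
def IsActiveC (n : ℕ) (h : Fin n → ℤ) (G : SimpleGraph (Fin (n + 1)))
    (e : Fin (n + 1) × Fin (n + 1)) : Prop :=
  cent n h e.1 < cent n h e.2 ∧ (Gh n h).Adj e.1 e.2 ∧ (aboveC n h G e).Reachable e.1 e.2

/-- The finset of `(G, h)`-active edges. -/
def activeC (n : ℕ) (h : Fin n → ℤ) (G : SimpleGraph (Fin (n + 1))) :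
    Finset (Fin (n + 1) × Fin (n + 1)) :=
  Finset.univ.filter (IsActiveC n h G)

/-- `G ⊕ e`: toggle the edge `e` (delete it if present, add it otherwise). -/
def toggleC {n : ℕ} (G : SimpleGraph (Fin (n + 1))) (e : Fin (n + 1) × Fin (n + 1)) :
    SimpleGraph (Fin (n + 1)) :=
  if G.Adj e.1 e.2 then G.deleteEdges {s(e.1, e.2)}
  else G ⊔ SimpleGraph.fromEdgeSet {s(e.1, e.2)}

/-- The map `Ψ_h`: toggle the least `(G, h)`-active edge, if any. -/
def PsiH (n : ℕ) (h : Fin n → ℤ) (G : SimpleGraph (Fin (n + 1))) :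
    SimpleGraph (Fin (n + 1)) :=
  if hne : (activeC n h G).Nonempty then
    toggleC G (Finset.exists_min_image (activeC n h G) (keyC n h) hne).choose
  else G

/-- The index `i_0` of the least coordinate of the centroid `h̄`. -/
def idxMin (n : ℕ) (h : Fin n → ℤ) : Fin (n + 1) :=
  (Finite.exists_min (cent n h)).choose

/-- An `h`-increasing tree on `{0, …, n}`: a spanning tree of `G_h` such that `h̄` strictly
increases along every simple path starting at the vertex `i_0` minimizing `h̄`. -/
def IsIncTree (n : ℕ) (h : Fin n → ℤ) (T : SimpleGraph (Fin (n + 1))) : Prop :=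
  T.IsTree ∧ T ≤ Gh n h ∧
    ∀ (v : Fin (n + 1)) (p : T.Walk (idxMin n h) v), p.IsPath →
      List.Chain' (fun a b => cent n h a < cent n h b) p.support

end


section CayleyAux

open SimpleGraph

variable {n : ℕ}

/-- Number of descents along a walk. -/
def wdesc {n : ℕ} {G : SimpleGraph (Fin (n+1))} {u v : Fin (n+1)} (p : G.Walk u v) : ℕ :=
  (p.darts.filter (fun d => decide (d.snd < d.fst))).length

@[simp] lemma wdesc_nil {G : SimpleGraph (Fin (n+1))} {u : Fin (n+1)} :
    wdesc (Walk.nil : G.Walk u u) = 0 := rfl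

lemma wdesc_cons {G : SimpleGraph (Fin (n+1))} {u v w : Fin (n+1)} (e : G.Adj u v)
    (p : G.Walk v w) : wdesc (Walk.cons e p) = (if v < u then 1 else 0) + wdesc p := by
  by_cases h : v < u <;> simp [wdesc, List.filter_cons, h, Nat.add_comm]

lemma wdesc_concat {G : SimpleGraph (Fin (n+1))} {u v w : Fin (n+1)} (p : G.Walk u v)
    (e : G.Adj v w) : wdesc (p.concat e) = wdesc p + (if w < v then 1 else 0) := by
  by_cases h : w < v <;>
    simp [wdesc, Walk.darts_concat, List.concat_eq_append, List.filter_append, h]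

lemma cent_sub (h : Fin n → ℤ) (i j : Fin (n+1)) :
    cent n h j - cent n h i
      = ((extv h j - extv h i : ℤ) : ℝ) + (((j:ℕ):ℝ) - ((i:ℕ):ℝ))/(n+1) := by
  simp only [cent]
  push_cast
  ring

lemma step_arith_iff {i j : Fin (n+1)} (hij : i ≠ j) (a b : ℤ) :
    (0 < ((b - a : ℤ) : ℝ) + (((j:ℕ):ℝ) - ((i:ℕ):ℝ))/(n+1) ∧
      ((b - a : ℤ) : ℝ) + (((j:ℕ):ℝ) - ((i:ℕ):ℝ))/(n+1) < 1) ↔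
    b = a + if j < i then 1 else 0 := by
  have hn : (0:ℝ) < (n:ℝ)+1 := by positivity
  have hi : ((i:ℕ):ℝ) < (n:ℝ)+1 := by exact_mod_cast i.isLt
  have hj : ((j:ℕ):ℝ) < (n:ℝ)+1 := by exact_mod_cast j.isLt
  have hi0 : (0:ℝ) ≤ ((i:ℕ):ℝ) := by positivity
  have hj0 : (0:ℝ) ≤ ((j:ℕ):ℝ) := by positivity
  have hvij : i < j ∨ j < i := by
    rcases lt_trichotomy i j with h | h | h
    · exact Or.inl h
    · exact absurd h hij
    · exact Or.inr h
  rcases hvij with hlt | hlt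
  · have hv : ((i:ℕ):ℝ) < ((j:ℕ):ℝ) := by exact_mod_cast hlt
    have hnot : ¬ (j < i) := not_lt_of_gt hlt
    rw [if_neg hnot]
    have h1 : 0 < (((j:ℕ):ℝ) - ((i:ℕ):ℝ))/((n:ℝ)+1) := by
      apply div_pos <;> linarith
    have h2 : (((j:ℕ):ℝ) - ((i:ℕ):ℝ))/((n:ℝ)+1) < 1 := by
      rw [div_lt_one hn]; linarith
    constructor
    · rintro ⟨hA, hB⟩
      have h3 : -(1:ℝ) < ((b - a : ℤ):ℝ) := by linarith
      have h4 : ((b - a : ℤ):ℝ) < 1 := by linarith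
      have h3' : (-1 : ℤ) < b - a := by exact_mod_cast h3
      have h4' : (b - a : ℤ) < 1 := by exact_mod_cast h4
      omega
    · intro hba
      have hz : b - a = 0 := by omega
      rw [hz]
      push_cast
      constructor <;> linarith
  · have hv : ((j:ℕ):ℝ) < ((i:ℕ):ℝ) := by exact_mod_cast hlt
    rw [if_pos hlt]
    have h1 : -(1:ℝ) < (((j:ℕ):ℝ) - ((i:ℕ):ℝ))/((n:ℝ)+1) := by
      rw [lt_div_iff₀ hn]; linarith
    have h2 : (((j:ℕ):ℝ) - ((i:ℕ):ℝ))/((n:ℝ)+1) < 0 := by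
      apply div_neg_of_neg_of_pos <;> linarith
    constructor
    · rintro ⟨hA, hB⟩
      have h3 : (0:ℝ) < ((b - a : ℤ):ℝ) := by linarith
      have h4 : ((b - a : ℤ):ℝ) < 2 := by linarith
      have h3' : (0:ℤ) < b - a := by exact_mod_cast h3
      have h4' : (b - a : ℤ) < 2 := by exact_mod_cast h4
      omega
    · intro hba
      have hz : b - a = 1 := by omega
      rw [hz]
      push_cast
      constructor <;> linarith

lemma cent_step_iff (h : Fin n → ℤ) {i j : Fin (n+1)} (hij : i ≠ j) :
    (0 < cent n h j - cent n h i ∧ cent n h j - cent n h i < 1) ↔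
      extv h j = extv h i + if j < i then 1 else 0 := by
  rw [cent_sub h i j]
  exact step_arith_iff hij (extv h i) (extv h j)

lemma chain'_support_iff_darts {V : Type*} {G : SimpleGraph V} (R : V → V → Prop) :
    ∀ {u v : V} (p : G.Walk u v), List.Chain' R p.support ↔ ∀ d ∈ p.darts, R d.fst d.snd := by
  intro u v p
  induction p with
  | nil => simp; exact List.isChain_singleton _
  | @cons a b c e q ih =>
    rw [Walk.support_cons, Walk.support_eq_cons q, List.Chain', List.isChain_cons_cons, ← Walk.support_eq_cons q,
      Walk.darts_cons, List.forall_mem_cons]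
    exact and_congr Iff.rfl ih

/-- The unique path in a tree from `r` to `v`. -/
noncomputable def thePath {T : SimpleGraph (Fin (n+1))} (hT : T.IsTree) (r v : Fin (n+1)) :
    T.Walk r v :=
  (hT.existsUnique_path r v).choose

lemma thePath_isPath {T : SimpleGraph (Fin (n+1))} (hT : T.IsTree) (r v : Fin (n+1)) :
    (thePath hT r v).IsPath := (hT.existsUnique_path r v).choose_spec.1

lemma thePath_unique {T : SimpleGraph (Fin (n+1))} (hT : T.IsTree) {r v : Fin (n+1)}
    (p : T.Walk r v) (hp : p.IsPath) : p = thePath hT r v :=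
  (hT.existsUnique_path r v).choose_spec.2 p hp

lemma isPath_concat' {V : Type*} {G : SimpleGraph V} {u v w : V} {p : G.Walk u v}
    (hp : p.IsPath) (e : G.Adj v w) (hw : w ∉ p.support) : (p.concat e).IsPath := by
  rw [← Walk.isPath_reverse_iff, Walk.reverse_concat]
  rw [Walk.cons_isPath_iff, Walk.isPath_reverse_iff, Walk.support_reverse]
  exact ⟨hp, by simpa using hw⟩

lemma isPath_of_concat' {V : Type*} {G : SimpleGraph V} {u v w : V} {p : G.Walk u v}
    (e : G.Adj v w) (hp : (p.concat e).IsPath) : p.IsPath := by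
  rw [← Walk.isPath_reverse_iff, Walk.reverse_concat] at hp
  rw [← Walk.isPath_reverse_iff]
  exact hp.of_cons

/-- Every edge of a tree occurs, in one of its two orientations, as a dart of the unique
path from `r` to one of its endpoints. -/
lemma edge_dart {T : SimpleGraph (Fin (n+1))} (hT : T.IsTree) (r : Fin (n+1))
    {a b : Fin (n+1)} (hab : T.Adj a b) :
    (⟨(a,b), hab⟩ : T.Dart) ∈ (thePath hT r b).darts ∨
    (⟨(b,a), hab.symm⟩ : T.Dart) ∈ (thePath hT r a).darts := by
  by_cases h1 : b ∈ (thePath hT r a).support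
  · right
    by_cases h2 : a ∈ (thePath hT r b).support
    · exfalso
      have hq := (thePath_isPath hT r b).takeUntil h2
      have heq : (thePath hT r b).takeUntil a h2 = thePath hT r a := thePath_unique hT _ hq
      have hnd := (thePath_isPath hT r b).support_nodup
      have hsupp : (thePath hT r b).support
          = ((thePath hT r b).takeUntil a h2).support
            ++ ((thePath hT r b).dropUntil a h2).support.tail := by
        conv_lhs => rw [← Walk.take_spec (thePath hT r b) h2]
        exact Walk.support_append _ _
      rw [hsupp] at hnd
      have hdis := (List.nodup_append.mp hnd).2.2
      have hb1 : b ∈ ((thePath hT r b).takeUntil a h2).support := by rw [heq]; exact h1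
      have hb2 : b ∈ ((thePath hT r b).dropUntil a h2).support.tail := by
        have hmem := Walk.end_mem_support ((thePath hT r b).dropUntil a h2)
        rw [Walk.support_eq_cons] at hmem
        rcases List.mem_cons.mp hmem with hba | hmem
        · exact absurd hba hab.ne'
        · exact hmem
      exact hdis b hb1 b hb2 rfl
    · have hpath : ((thePath hT r b).concat hab.symm).IsPath :=
        isPath_concat' (thePath_isPath hT r b) hab.symm h2
      have heq := thePath_unique hT _ hpath
      rw [← heq, Walk.darts_concat]
      simp
  · left
    have hpath : ((thePath hT r a).concat hab).IsPath :=
      isPath_concat' (thePath_isPath hT r a) hab h1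
    have heq := thePath_unique hT _ hpath
    rw [← heq, Walk.darts_concat]
    simp

/-- Along a path from `r` in a tree, the descent counts of the tree paths to consecutive
vertices differ by the descent indicator. -/
lemma gstep {T : SimpleGraph (Fin (n+1))} (hT : T.IsTree) (r : Fin (n+1)) :
    ∀ {v : Fin (n+1)} (p : T.Walk r v), p.IsPath →
      ∀ d ∈ p.darts, (wdesc (thePath hT r d.snd) : ℤ)
        = (wdesc (thePath hT r d.fst) : ℤ) + if d.snd < d.fst then 1 else 0 := by
  intro v p
  induction p using SimpleGraph.Walk.concatRec with
  | Hnil => intro _ d hd; simp at hd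
  | Hconcat q e ih =>
    intro hp d hd
    have hq : q.IsPath := isPath_of_concat' e hp
    rw [Walk.darts_concat, List.concat_eq_append, List.mem_append] at hd
    rcases hd with hd | hd
    · exact ih hq d hd
    · simp only [List.mem_singleton] at hd
      subst hd
      have hpv := thePath_unique hT _ hp
      have hpu := thePath_unique hT q hq
      rw [← hpv, ← hpu, wdesc_concat]
      push_cast
      ring

lemma extv_eq_of_darts (h : Fin n → ℤ) {G : SimpleGraph (Fin (n+1))} {u v : Fin (n+1)}
    (p : G.Walk u v)
    (hd : ∀ d ∈ p.darts, (extv h d.snd : ℤ) = extv h d.fst + if d.snd < d.fst then 1 else 0) :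
    (extv h v : ℤ) = extv h u + wdesc p := by
  induction p with
  | nil => simp
  | @cons a b c e q ih =>
    rw [wdesc_cons]
    have h1 := hd _ (by rw [Walk.darts_cons]; exact List.mem_cons_self)
    have h2 := ih (fun d hdm => hd d (by rw [Walk.darts_cons]; exact List.mem_cons_of_mem _ hdm))
    simp only at h1
    push_cast
    split_ifs at h1 ⊢ <;> omega

lemma wdesc_zero_le {G : SimpleGraph (Fin (n+1))} :
    ∀ {u v : Fin (n+1)} (p : G.Walk u v), wdesc p = 0 → u ≤ v := by
  intro u v p
  induction p with
  | nil => intro _; exact le_refl _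
  | @cons a b c e q ih =>
    rw [wdesc_cons]
    intro hz
    split_ifs at hz with hba
    · omega
    · exact le_trans (not_lt.mp hba) (ih (by omega))

end CayleyAux

/-- Every rooted Cayley tree `T` on `{0, …, n}` with root `r` is `h`-increasing for exactly
one `h ∈ ℤ^n` such that `h̄_r` is the minimum of the centroid `h̄` (being `h`-increasing
means: `T ⊆ G_h` and `h̄` strictly increases along every simple path starting at `r`). -/
theorem cayley_tree_unique_h (n : ℕ) (T : SimpleGraph (Fin (n + 1))) (hT : T.IsTree)
    (r : Fin (n + 1)) :
    ∃! h : Fin n → ℤ,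
      (∀ j : Fin (n + 1), cent n h r ≤ cent n h j) ∧ T ≤ Gh n h ∧
        ∀ (v : Fin (n + 1)) (p : T.Walk r v), p.IsPath →
          List.Chain' (fun a b => cent n h a < cent n h b) p.support := by
    classical
  have hext0 : ∀ (h : Fin n → ℤ), (extv h 0 : ℤ) = 0 := fun h => rfl
  set h0 : Fin n → ℤ :=
    fun j => (wdesc (thePath hT r j.succ) : ℤ) - (wdesc (thePath hT r 0) : ℤ) with hh0
  have hext : ∀ v : Fin (n+1),
      (extv h0 v : ℤ) = (wdesc (thePath hT r v) : ℤ) - (wdesc (thePath hT r 0) : ℤ) := by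
    intro v
    induction v using Fin.cases with
    | zero => simp [extv]
    | succ j => simp [extv, hh0]
  have hstep : ∀ (v : Fin (n+1)) (p : T.Walk r v), p.IsPath → ∀ d ∈ p.darts,
      (extv h0 d.snd : ℤ) = extv h0 d.fst + if d.snd < d.fst then 1 else 0 := by
    intro v p hp d hd
    have hgs := gstep hT r p hp d hd
    rw [hext, hext]
    split_ifs at hgs ⊢ <;> omega
  have hchain : ∀ (v : Fin (n+1)) (p : T.Walk r v), p.IsPath →
      List.Chain' (fun a b => cent n h0 a < cent n h0 b) p.support := by
    intro v p hp
    rw [chain'_support_iff_darts]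
    intro d hd
    have hc := (cent_step_iff h0 d.fst_ne_snd).mpr (hstep v p hp d hd)
    linarith [hc.1]
  have hsub : T ≤ Gh n h0 := by
    intro a b hab
    refine ⟨hab.ne, ?_⟩
    rcases edge_dart hT r hab with hd | hd
    · have hc := (cent_step_iff h0 hab.ne).mpr
        (hstep b (thePath hT r b) (thePath_isPath hT r b) _ hd)
      rw [abs_sub_lt_iff]
      constructor <;> linarith [hc.1, hc.2]
    · have hc := (cent_step_iff h0 hab.ne').mpr
        (hstep a (thePath hT r a) (thePath_isPath hT r a) _ hd)
      rw [abs_sub_lt_iff]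
      constructor <;> linarith [hc.1, hc.2]
  have hwr : wdesc (thePath hT r r) = 0 := by
    have hnil : (SimpleGraph.Walk.nil : T.Walk r r) = thePath hT r r :=
      thePath_unique hT _ SimpleGraph.Walk.IsPath.nil
    rw [← hnil]
    rfl
  have hmin : ∀ j : Fin (n+1), cent n h0 r ≤ cent n h0 j := by
    intro j
    have hd := cent_sub h0 r j
    rw [hext, hext, hwr] at hd
    push_cast at hd
    have hn : (0:ℝ) < (n:ℝ)+1 := by positivity
    have hrl : ((r:ℕ):ℝ) < (n:ℝ)+1 := by exact_mod_cast r.isLt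
    have hj0 : (0:ℝ) ≤ ((j:ℕ):ℝ) := by positivity
    rcases Nat.eq_zero_or_pos (wdesc (thePath hT r j)) with hz | hpos
    · have hle : r ≤ j := wdesc_zero_le (thePath hT r j) hz
      have hle' : ((r:ℕ):ℝ) ≤ ((j:ℕ):ℝ) := by exact_mod_cast hle
      have hfrac : (0:ℝ) ≤ (((j:ℕ):ℝ) - ((r:ℕ):ℝ))/((n:ℝ)+1) := by
        apply div_nonneg <;> linarith
      rw [hz] at hd
      push_cast at hd
      linarith
    · have hpos' : (1:ℝ) ≤ ((wdesc (thePath hT r j) : ℕ) : ℝ) := by exact_mod_cast hpos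
      have hfrac : -(1:ℝ) < (((j:ℕ):ℝ) - ((r:ℕ):ℝ))/((n:ℝ)+1) := by
        rw [lt_div_iff₀ hn]; linarith
      linarith
  refine ⟨h0, ⟨hmin, hsub, hchain⟩, ?_⟩
  rintro h' ⟨hmin', hsub', hchain'⟩
  have hstep' : ∀ (v : Fin (n+1)) (p : T.Walk r v), p.IsPath → ∀ d ∈ p.darts,
      (extv h' d.snd : ℤ) = extv h' d.fst + if d.snd < d.fst then 1 else 0 := by
    intro v p hp d hd
    have hlt := (chain'_support_iff_darts _ p).mp (hchain' v p hp) d hd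
    have hadj : (Gh n h').Adj d.fst d.snd := hsub' d.adj
    have habs := hadj.2
    rw [abs_sub_lt_iff] at habs
    exact (cent_step_iff h' d.fst_ne_snd).mp ⟨by linarith, by linarith [habs.2]⟩
  have hval : ∀ v : Fin (n+1), (extv h' v : ℤ) = extv h' r + wdesc (thePath hT r v) :=
    fun v => extv_eq_of_darts h' (thePath hT r v) (hstep' v _ (thePath_isPath hT r v))
  have hr0 : (extv h' r : ℤ) = - (wdesc (thePath hT r 0) : ℤ) := by
    have hv0 := hval 0
    rw [hext0] at hv0
    omega
  funext j
  have hj := hval j.succ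
  have hjl : (extv h' j.succ : ℤ) = h' j := rfl
  rw [hjl, hr0] at hj
  rw [hj]
  simp only [hh0]
  ring
end
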